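/- Let r, s be positive integers and b₁, …, b_{s+r} ∈ ℂ pairwise distinct; set k_s(x) = (x−b₁)⋯(x−b_s) and k_r(x) = (x−b_{s+1})⋯(x−b_{s+r}). Define f₁ = y₁² − y₂k_r(x), f₂ = y₁y₂ − k_r(x)k_s(x), f₃ = y₂² − y₁k_s(x). Then at every point (x, y₁, y₂) ∈ ℂ³ with f₁ = f₂ = f₃ = 0, the 3×3 matrix of partial derivatives (∂f_i/∂x, ∂f_i/∂y₁, ∂f_i/∂y₂)_{i=1,2,3} has rank exactly 2; in particular the affine curve X^{(3,2r+s,r+2s)} is non-singular. -/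

import Mathlib

open Polynomial

lemma aux_deriv_ne (n : ℕ) (f : ℕ → ℂ) (hf : ∀ i j, i < n → j < n → i ≠ j → f i ≠ f j)
    (x : ℂ) (hx : (∏ i ∈ Finset.range n, (X - C (f i))).eval x = 0) :
    (derivative (∏ i ∈ Finset.range n, (X - C (f i)))).eval x ≠ 0 := by
  have hsep : (∏ i ∈ Finset.range n, (X - C (f i))).Separable := by
    rw [separable_prod_X_sub_C_iff']
    intro i hi j hj hij
    by_contra h
    exact hf i j (Finset.mem_range.mp hi) (Finset.mem_range.mp hj) h hij
  obtain ⟨u, v, huv⟩ := hsep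
  intro h0
  have h1 := congrArg (Polynomial.eval x) huv
  simp [hx, h0] at h1

lemma aux_rank_le_two (M : Matrix (Fin 3) (Fin 3) ℂ) (u : Fin 3 → ℂ) (hu : u ≠ 0)
    (hcol : ∀ j, u 0 * M 0 j + u 1 * M 1 j + u 2 * M 2 j = 0) : M.rank ≤ 2 := by
  have h : Matrix.of (fun (_ : Fin 1) (j : Fin 3) => u j) * M = 0 := by
    ext i j
    simpa [Matrix.mul_apply, Fin.sum_univ_three] using hcol j
  have h1 := Matrix.rank_add_rank_le_card_of_mul_eq_zero h
  have h2 : (Matrix.of (fun (_ : Fin 1) (j : Fin 3) => u j)).rank = 1 := by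
    rw [Matrix.rank_eq_finrank_span_row]
    have hr : Set.range (Matrix.of fun (_ : Fin 1) (j : Fin 3) => u j).row = {u} :=
      Set.range_const
    rw [hr, finrank_span_singleton hu]
  rw [h2, Fintype.card_fin] at h1
  omega

lemma aux_two_le_rank (M : Matrix (Fin 3) (Fin 3) ℂ) (A : Matrix (Fin 2) (Fin 3) ℂ)
    (B : Matrix (Fin 3) (Fin 2) ℂ) (h : (A * M * B).det ≠ 0) : 2 ≤ M.rank := by
  have h1 : (A * M * B).rank = 2 := by
    rw [Matrix.rank_of_isUnit _ ((Matrix.isUnit_iff_isUnit_det _).mpr (isUnit_iff_ne_zero.mpr h)),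
      Fintype.card_fin]
  calc (2:ℕ) = (A*M*B).rank := h1.symm
    _ ≤ (A*M).rank := Matrix.rank_mul_le_left _ _
    _ ≤ M.rank := Matrix.rank_mul_le_right _ _

/-- Let `r, s` be positive integers and `b₁, …, b_{s+r} ∈ ℂ` pairwise distinct;
`k_s(x) = (x−b₁)⋯(x−b_s)`, `k_r(x) = (x−b_{s+1})⋯(x−b_{s+r})`. With
`f₁ = y₁² − y₂k_r(x)`, `f₂ = y₁y₂ − k_r(x)k_s(x)`, `f₃ = y₂² − y₁k_s(x)`, at every point
of the affine curve `f₁ = f₂ = f₃ = 0` the 3×3 Jacobian matrix of `(f₁, f₂, f₃)` with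
respect to `(x, y₁, y₂)` has rank exactly 2; in particular the curve is non-singular. -/
theorem stmt6 (r s : ℕ) (hr : 0 < r) (hs : 0 < s) (b : ℕ → ℂ)
    (hb : ∀ i j, i < s + r → j < s + r → i ≠ j → b i ≠ b j)
    (ks kr : Polynomial ℂ)
    (hks : ks = ∏ i ∈ Finset.range s, (Polynomial.X - Polynomial.C (b i)))
    (hkr : kr = ∏ i ∈ Finset.range r, (Polynomial.X - Polynomial.C (b (s + i)))) :
    ∀ x y₁ y₂ : ℂ,
      y₁ ^ 2 = y₂ * kr.eval x →
      y₁ * y₂ = kr.eval x * ks.eval x →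
      y₂ ^ 2 = y₁ * ks.eval x →
      (!![-(y₂ * (Polynomial.derivative kr).eval x), 2 * y₁, -(kr.eval x);
          -((Polynomial.derivative (kr * ks)).eval x), y₂, y₁;
          -(y₁ * (Polynomial.derivative ks).eval x), -(ks.eval x), 2 * y₂] :
        Matrix (Fin 3) (Fin 3) ℂ).rank = 2 := by
  intro x y₁ y₂ h1 h2 h3
  set M : Matrix (Fin 3) (Fin 3) ℂ :=
    !![-(y₂ * (Polynomial.derivative kr).eval x), 2 * y₁, -(kr.eval x);
       -((Polynomial.derivative (kr * ks)).eval x), y₂, y₁;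
       -(y₁ * (Polynomial.derivative ks).eval x), -(ks.eval x), 2 * y₂] with hM
  have hdm : (Polynomial.derivative (kr * ks)).eval x
      = (Polynomial.derivative kr).eval x * ks.eval x
        + kr.eval x * (Polynomial.derivative ks).eval x := by
    simp [derivative_mul]
  -- kr and ks cannot vanish simultaneously
  have hzero : ¬ (kr.eval x = 0 ∧ ks.eval x = 0) := by
    rintro ⟨hA, hC⟩
    rw [hkr, eval_prod] at hA
    rw [hks, eval_prod] at hC
    obtain ⟨i, hi, hi0⟩ := Finset.prod_eq_zero_iff.mp hA
    obtain ⟨j, hj, hj0⟩ := Finset.prod_eq_zero_iff.mp hC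
    simp only [eval_sub, eval_X, eval_C, sub_eq_zero] at hi0 hj0
    rw [Finset.mem_range] at hi hj
    exact hb (s + i) j (by omega) (by omega) (by omega) (hj0 ▸ hi0.symm ▸ rfl)
  by_cases hA : kr.eval x = 0
  · -- Case kr(x) = 0
    have hC : ks.eval x ≠ 0 := fun h => hzero ⟨hA, h⟩
    have hy₁ : y₁ = 0 := by
      have : y₁ ^ 2 = 0 := by rw [h1, hA, mul_zero]
      exact pow_eq_zero_iff (by norm_num) |>.mp this
    have hy₂ : y₂ = 0 := by
      have : y₂ ^ 2 = 0 := by rw [h3, hy₁, zero_mul]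
      exact pow_eq_zero_iff (by norm_num) |>.mp this
    have hA' : (Polynomial.derivative kr).eval x ≠ 0 := by
      rw [hkr]
      exact aux_deriv_ne r (fun i => b (s + i))
        (fun i j hi hj hij => hb (s + i) (s + j) (by omega) (by omega) (by omega))
        x (by rw [← hkr]; exact hA)
    refine le_antisymm ?_ ?_
    · apply aux_rank_le_two M ![1, 0, 0]
      · exact fun h => (one_ne_zero : (1:ℂ) ≠ 0) (by simpa using congrFun h 0)
      · intro j
        fin_cases j <;> simp [hM, hy₁, hy₂, hA, Matrix.vecHead, Matrix.vecTail]
    · apply aux_two_le_rank M !![(0:ℂ),1,0;0,0,1] !![(1:ℂ),0;0,1;0,0]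
      have hdet : (!![(0:ℂ),1,0;0,0,1] * M * !![(1:ℂ),0;0,1;0,0]).det
          = (Polynomial.derivative kr).eval x * ks.eval x ^ 2 := by
        simp [hM, Matrix.mul_apply, Fin.sum_univ_three, Fin.sum_univ_two,
          Matrix.det_fin_two, hy₁, hy₂, hdm, hA]
        ring
      rw [hdet]
      exact mul_ne_zero hA' (pow_ne_zero _ hC)
  · by_cases hC : ks.eval x = 0
    · -- Case ks(x) = 0
      have hy₂ : y₂ = 0 := by
        have : y₂ ^ 2 = 0 := by rw [h3, hC, mul_zero]
        exact pow_eq_zero_iff (by norm_num) |>.mp this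
      have hy₁ : y₁ = 0 := by
        have : y₁ ^ 2 = 0 := by rw [h1, hy₂, zero_mul]
        exact pow_eq_zero_iff (by norm_num) |>.mp this
      have hC' : (Polynomial.derivative ks).eval x ≠ 0 := by
        rw [hks]
        exact aux_deriv_ne s (fun i => b i)
          (fun i j hi hj hij => hb i j (by omega) (by omega) hij)
          x (by rw [← hks]; exact hC)
      refine le_antisymm ?_ ?_
      · apply aux_rank_le_two M ![0, 0, 1]
        · exact fun h => (one_ne_zero : (1:ℂ) ≠ 0) (by simpa using congrFun h 2)
        · intro j
          fin_cases j <;> simp [hM, hy₁, hy₂, hC, Matrix.vecHead, Matrix.vecTail]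
      · apply aux_two_le_rank M !![(1:ℂ),0,0;0,1,0] !![(1:ℂ),0;0,0;0,1]
        have hdet : (!![(1:ℂ),0,0;0,1,0] * M * !![(1:ℂ),0;0,0;0,1]).det
            = -(kr.eval x ^ 2 * (Polynomial.derivative ks).eval x) := by
          simp [hM, Matrix.mul_apply, Fin.sum_univ_three, Fin.sum_univ_two,
            Matrix.det_fin_two, hy₁, hy₂, hdm, hC]
          ring
        rw [hdet]
        exact neg_ne_zero.mpr (mul_ne_zero (pow_ne_zero _ hA) hC')
    · -- Generic case: kr(x) ≠ 0, ks(x) ≠ 0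
      refine le_antisymm ?_ ?_
      · apply aux_rank_le_two M ![y₂, -y₁, kr.eval x]
        · exact fun h => hA (by simpa using congrFun h 2)
        · intro j
          fin_cases j
          · show y₂ * (-(y₂ * (Polynomial.derivative kr).eval x))
                + (-y₁) * (-((Polynomial.derivative (kr * ks)).eval x))
                + kr.eval x * (-(y₁ * (Polynomial.derivative ks).eval x)) = 0
            linear_combination (-(Polynomial.derivative kr).eval x) * h3 + y₁ * hdm
          · show y₂ * (2 * y₁) + (-y₁) * y₂ + kr.eval x * (-(ks.eval x)) = 0
            linear_combination h2
          · show y₂ * (-(kr.eval x)) + (-y₁) * y₁ + kr.eval x * (2 * y₂) = 0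
            linear_combination -h1
      · apply aux_two_le_rank M !![(1:ℂ),0,0;0,0,1] !![(0:ℂ),0;1,0;0,1]
        have hdet : (!![(1:ℂ),0,0;0,0,1] * M * !![(0:ℂ),0;1,0;0,1]).det
            = 3 * (kr.eval x * ks.eval x) := by
          simp [hM, Matrix.mul_apply, Fin.sum_univ_three, Fin.sum_univ_two,
            Matrix.det_fin_two]
          linear_combination 4 * h2
        rw [hdet]
        exact mul_ne_zero (by norm_num) (mul_ne_zero hA hC)
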